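/- If ξ is a centered Gaussian vector in ℝ^d with covariance matrix Σ, then for all 0 ≤ λ < 1/(2‖Σ‖), log E[exp(λ‖ξ‖²)] ≤ λ·tr(Σ) + λ²‖Σ‖_F² / (1 − 2λ‖Σ‖). -/

import Mathlib

open MeasureTheory ProbabilityTheory Real RealInnerProductSpace
open scoped ENNReal NNReal

lemma gaussianPDFReal_one (m x : ℝ) :
    gaussianPDFReal m 1 x = (√(2 * π))⁻¹ * rexp (-(x - m) ^ 2 / 2) := by
  simp [gaussianPDFReal]

lemma integral_gaussianReal_std (g : ℝ → ℝ) :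
    ∫ x, g x ∂(gaussianReal 0 1) = ∫ x, gaussianPDFReal 0 1 x * g x := by
  rw [gaussianReal_of_var_ne_zero _ one_ne_zero, gaussianPDF_def]
  have h : (fun x => ENNReal.ofReal (gaussianPDFReal 0 1 x))
      = fun x => ((gaussianPDFReal 0 1 x).toNNReal : ℝ≥0∞) := rfl
  rw [h, integral_withDensity_eq_integral_smul
    ((measurable_gaussianPDFReal 0 1).real_toNNReal) g]
  congr 1
  ext x
  simp [NNReal.smul_def, Real.coe_toNNReal _ (gaussianPDFReal_nonneg 0 1 x)]

lemma gauss_lin (c : ℝ) :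
    ∫ x, Real.exp (c * x) ∂(gaussianReal 0 1) = Real.exp (c ^ 2 / 2) := by
  rw [integral_gaussianReal_std]
  have h : ∀ x : ℝ, gaussianPDFReal 0 1 x * Real.exp (c * x)
      = Real.exp (c ^ 2 / 2) * gaussianPDFReal c 1 x := by
    intro x
    rw [gaussianPDFReal_one, gaussianPDFReal_one, mul_assoc, ← Real.exp_add,
      ← mul_assoc, mul_comm (Real.exp (c ^ 2 / 2)), mul_assoc, ← Real.exp_add]
    congr 1
    ring
  simp_rw [h]
  rw [integral_const_mul, integral_gaussianPDFReal_eq_one c one_ne_zero, mul_one]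

lemma gauss_sq {k : ℝ} (hk : k < 1/2) :
    ∫ x, Real.exp (k * x ^ 2) ∂(gaussianReal 0 1) = Real.sqrt (1 / (1 - 2 * k)) := by
  rw [integral_gaussianReal_std]
  have h : ∀ x : ℝ, gaussianPDFReal 0 1 x * Real.exp (k * x ^ 2)
      = (Real.sqrt (2 * π))⁻¹ * Real.exp (-(1/2 - k) * x ^ 2) := by
    intro x
    rw [gaussianPDFReal_one, mul_assoc, ← Real.exp_add]
    congr 2
    ring
  simp_rw [h]
  rw [integral_const_mul, integral_gaussian]
  rw [← Real.sqrt_inv, ← Real.sqrt_mul (by positivity)]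
  congr 1
  have h1 : (0:ℝ) < 1/2 - k := by linarith
  have h2 : (0:ℝ) < 1 - 2*k := by linarith
  have hπ := Real.pi_pos
  field_simp

lemma integrable_gauss_lin (c : ℝ) :
    Integrable (fun x => Real.exp (c * x)) (gaussianReal 0 1) := by
  rw [gaussianReal_of_var_ne_zero _ one_ne_zero, gaussianPDF_def,
    integrable_withDensity_iff ((measurable_gaussianPDFReal 0 1).ennreal_ofReal) (by simp [ENNReal.ofReal_lt_top])]
  have h : ∀ x : ℝ, Real.exp (c * x) * (ENNReal.ofReal (gaussianPDFReal 0 1 x)).toReal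
      = Real.exp (c ^ 2 / 2) * gaussianPDFReal c 1 x := by
    intro x
    rw [ENNReal.toReal_ofReal (gaussianPDFReal_nonneg 0 1 x), gaussianPDFReal_one,
      gaussianPDFReal_one, mul_comm, mul_assoc, ← Real.exp_add,
      ← mul_assoc, mul_comm (Real.exp (c ^ 2 / 2)), mul_assoc, ← Real.exp_add]
    congr 1
    ring
  simp_rw [h]
  exact (integrable_gaussianPDFReal c 1).const_mul _

lemma integrable_gauss_sq {k : ℝ} (hk : k < 1/2) :
    Integrable (fun x => Real.exp (k * x ^ 2)) (gaussianReal 0 1) := by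
  rw [gaussianReal_of_var_ne_zero _ one_ne_zero, gaussianPDF_def,
    integrable_withDensity_iff ((measurable_gaussianPDFReal 0 1).ennreal_ofReal) (by simp [ENNReal.ofReal_lt_top])]
  have h : ∀ x : ℝ, Real.exp (k * x ^ 2) * (ENNReal.ofReal (gaussianPDFReal 0 1 x)).toReal
      = (Real.sqrt (2 * π))⁻¹ * Real.exp (-(1/2 - k) * x ^ 2) := by
    intro x
    rw [ENNReal.toReal_ofReal (gaussianPDFReal_nonneg 0 1 x), gaussianPDFReal_one,
      mul_comm, mul_assoc, ← Real.exp_add]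
    congr 2
    ring
  simp_rw [h]
  exact (integrable_exp_neg_mul_sq (by linarith)).const_mul _

lemma lint_gauss_lin (c : ℝ) :
    ∫⁻ x, ENNReal.ofReal (Real.exp (c * x)) ∂(gaussianReal 0 1)
      = ENNReal.ofReal (Real.exp (c ^ 2 / 2)) := by
  rw [← ofReal_integral_eq_lintegral_ofReal (integrable_gauss_lin c)
    (Filter.Eventually.of_forall fun x => (Real.exp_pos _).le), gauss_lin]

lemma lint_gauss_sq {k : ℝ} (hk : k < 1/2) :
    ∫⁻ x, ENNReal.ofReal (Real.exp (k * x ^ 2)) ∂(gaussianReal 0 1)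
      = ENNReal.ofReal (Real.sqrt (1 / (1 - 2 * k))) := by
  rw [← ofReal_integral_eq_lintegral_ofReal (integrable_gauss_sq hk)
    (Filter.Eventually.of_forall fun x => (Real.exp_pos _).le), gauss_sq hk]

lemma lintegral_pi_prod : ∀ {n : ℕ} (ν : Measure ℝ) [SigmaFinite ν]
    (f : Fin n → ℝ → ℝ≥0∞), (∀ i, Measurable (f i)) →
    ∫⁻ x : Fin n → ℝ, ∏ i, f i (x i) ∂(Measure.pi fun _ => ν) = ∏ i, ∫⁻ t, f i t ∂ν := by
  intro n
  induction n with
  | zero => intro ν _ f hf; simp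
  | succ n ih =>
    intro ν _ f hf
    have h := ((measurePreserving_piFinSuccAbove (fun _ : Fin (n+1) => ν) 0).symm)
    rw [← h.lintegral_comp_emb (MeasurableEquiv.measurableEmbedding _)]
    simp only [MeasurableEquiv.piFinSuccAbove_symm_apply, Fin.insertNthEquiv,
      Fin.prod_univ_succ, Fin.insertNth_zero, Equiv.coe_fn_mk,
      Fin.zero_succAbove, Fin.cons_zero, Fin.cons_succ]
    show ∫⁻ p : ℝ × (Fin n → ℝ), f 0 p.1 * ∏ i : Fin n, f i.succ (p.2 i)
        ∂(ν.prod (Measure.pi fun _ => ν)) = _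
    rw [lintegral_prod_mul (f := f 0) (g := fun y : Fin n → ℝ => ∏ i : Fin n, f i.succ (y i))
      (hf 0).aemeasurable
      (Finset.measurable_prod _ (fun i _ => (hf i.succ).comp (measurable_pi_apply i))).aemeasurable,
      ih ν (fun i => f i.succ) (fun i => hf i.succ)]

lemma neg_log_one_sub_le {a x : ℝ} (hx0 : 0 ≤ x) (hxa : x ≤ a) (ha : a < 1) :
    -Real.log (1 - x) ≤ x + x ^ 2 / (2 * (1 - a)) := by
  set g : ℝ → ℝ := fun t => t + t ^ 2 / (2 * (1 - a)) + Real.log (1 - t) with hg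
  have ha0 : 0 ≤ a := le_trans hx0 hxa
  have hder : ∀ t ∈ Set.Icc (0:ℝ) a, HasDerivAt g
      (1 + 2 * t / (2 * (1 - a)) + (1 - t)⁻¹ * (-1)) t := by
    intro t ht
    have hne : (1 : ℝ) - t ≠ 0 := by
      have := ht.2; intro h; nlinarith
    have h1 : HasDerivAt (fun t : ℝ => 1 - t) (-1) t := by
      simpa using (hasDerivAt_id t).const_sub 1
    have hlog : HasDerivAt (fun t : ℝ => Real.log (1 - t)) ((1 - t)⁻¹ * (-1)) t :=
      (Real.hasDerivAt_log hne).comp t h1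
    have h2 : HasDerivAt (fun t : ℝ => t ^ 2 / (2 * (1 - a))) (2 * t / (2 * (1 - a))) t := by
      simpa using (hasDerivAt_pow 2 t).div_const (2 * (1 - a))
    exact ((hasDerivAt_id t).add h2).add hlog
  have hmono : MonotoneOn g (Set.Icc (0:ℝ) a) := by
    apply monotoneOn_of_deriv_nonneg (convex_Icc 0 a)
    · exact fun t ht => ((hder t ht).continuousAt).continuousWithinAt
    · intro t ht
      rw [interior_Icc] at ht
      exact ((hder t (Set.mem_Icc_of_Ioo ht)).differentiableAt).differentiableWithinAt
    · intro t ht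
      rw [interior_Icc] at ht
      rw [(hder t (Set.mem_Icc_of_Ioo ht)).deriv]
      have h1t : (0:ℝ) < 1 - t := by have := ht.2; linarith
      have h1a : (0:ℝ) < 1 - a := by linarith
      have key : 1 + t / (1 - a) - (1 - t)⁻¹ = t / (1 - a) * (1 - t)⁻¹ * (a - t) := by
        field_simp
        ring
      have hw : 2 * t / (2 * (1 - a)) = t / (1 - a) := by
        rw [div_eq_div_iff (by linarith) h1a.ne']
        ring
      have hpos : 0 ≤ t / (1 - a) * (1 - t)⁻¹ * (a - t) :=
        mul_nonneg (mul_nonneg (div_nonneg ht.1.le h1a.le) (inv_nonneg.2 h1t.le))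
          (sub_nonneg.2 ht.2.le)
      rw [hw]
      linarith
  have h0 : g 0 = 0 := by simp [hg]
  have hx : g 0 ≤ g x := hmono (Set.mem_Icc.2 ⟨le_refl 0, ha0⟩) (Set.mem_Icc.2 ⟨hx0, hxa⟩) hx0
  rw [h0] at hx
  simp only [hg] at hx
  linarith

/-- If `ξ` is a centered Gaussian vector in `ℝ^d` with covariance matrix `Σ`
(characterised by its moment generating function), then for all
`0 ≤ λ < 1/(2‖Σ‖)`, `log E[exp(λ‖ξ‖²)] ≤ λ tr Σ + λ²‖Σ‖_F²/(1 - 2λ‖Σ‖)`. -/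
theorem gaussian_squared_norm_cgf_bound
    {Ω : Type*} [MeasurableSpace Ω] {μ : Measure Ω} [IsProbabilityMeasure μ]
    {d : ℕ} (ξ : Ω → EuclideanSpace ℝ (Fin d)) (hmeas : AEMeasurable ξ μ)
    (S : EuclideanSpace ℝ (Fin d) →L[ℝ] EuclideanSpace ℝ (Fin d))
    (hS : S.IsPositive)
    (hgauss : ∀ u : EuclideanSpace ℝ (Fin d),
      ∫ ω, Real.exp ⟪u, ξ ω⟫ ∂μ = Real.exp (⟪u, S u⟫ / 2))
    (l : ℝ) (hl0 : 0 ≤ l) (hl : l < 1 / (2 * ‖S‖)) :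
    Real.log (∫ ω, Real.exp (l * ‖ξ ω‖ ^ 2) ∂μ) ≤
      l * (∑ i, ⟪EuclideanSpace.basisFun (Fin d) ℝ i,
            S (EuclideanSpace.basisFun (Fin d) ℝ i)⟫) +
        l ^ 2 * (∑ i, ‖S (EuclideanSpace.basisFun (Fin d) ℝ i)‖ ^ 2) /
          (1 - 2 * l * ‖S‖) := by
  classical
  rcases eq_or_lt_of_le (norm_nonneg S) with hS0 | hSpos
  · exfalso
    rw [← hS0] at hl
    norm_num at hl
    linarith
  have ha : 2 * l * ‖S‖ < 1 := by
    rw [lt_div_iff₀ (by positivity)] at hl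
    linarith
  -- Spectral decomposition
  have hsym : (S : EuclideanSpace ℝ (Fin d) →ₗ[ℝ] EuclideanSpace ℝ (Fin d)).IsSymmetric := by
    have := hS.isSelfAdjoint
    rwa [ContinuousLinearMap.isSelfAdjoint_iff_isSymmetric] at this
  have hd : Module.finrank ℝ (EuclideanSpace ℝ (Fin d)) = d := finrank_euclideanSpace_fin
  set b := hsym.eigenvectorBasis hd with hb
  set lam := hsym.eigenvalues hd with hlamdef
  have heig : ∀ i, S (b i) = lam i • b i := fun i =>
    (hsym.hasEigenvector_eigenvectorBasis hd i).apply_eq_smul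
  have hlam0 : ∀ i, 0 ≤ lam i := by
    intro i
    have h := hS.2 (b i)
    rw [ContinuousLinearMap.reApplyInnerSelf, RCLike.re_to_real, heig i,
      real_inner_smul_left, real_inner_self_eq_norm_mul_norm, b.orthonormal.1 i] at h
    simpa using h
  have hlamle : ∀ i, lam i ≤ ‖S‖ := by
    intro i
    have h2 : |lam i| ≤ ‖S‖ := by
      calc |lam i| = ‖S (b i)‖ := by
            rw [heig i, norm_smul, b.orthonormal.1 i, Real.norm_eq_abs, mul_one]
        _ ≤ ‖S‖ * ‖b i‖ := S.le_opNorm _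
        _ = ‖S‖ := by rw [b.orthonormal.1 i, mul_one]
    exact (le_abs_self _).trans h2
  set e := EuclideanSpace.basisFun (Fin d) ℝ with he
  have parB : ∀ x y : EuclideanSpace ℝ (Fin d), ∑ i, ⟪b i, x⟫ * ⟪b i, y⟫ = ⟪x, y⟫ := by
    intro x y
    rw [← b.sum_inner_mul_inner x y]
    exact Finset.sum_congr rfl fun i _ => by rw [real_inner_comm x (b i)]
  have parE : ∀ x y : EuclideanSpace ℝ (Fin d), ∑ j, ⟪e j, x⟫ * ⟪e j, y⟫ = ⟪x, y⟫ := by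
    intro x y
    rw [← e.sum_inner_mul_inner x y]
    exact Finset.sum_congr rfl fun i _ => by rw [real_inner_comm x (e i)]
  have hsym' : ∀ x y : EuclideanSpace ℝ (Fin d), ⟪S x, y⟫ = ⟪x, S y⟫ := fun x y => hsym x y
  have hSb : ∀ i (x : EuclideanSpace ℝ (Fin d)), ⟪b i, S x⟫ = lam i * ⟪b i, x⟫ := by
    intro i x
    rw [← hsym' (b i) x, heig i, real_inner_smul_left]
  have trace1 : ∑ j, ⟪e j, S (e j)⟫ = ∑ i, lam i := by
    have h1 : ∀ j, ⟪e j, S (e j)⟫ = ∑ i, lam i * (⟪b i, e j⟫ * ⟪b i, e j⟫) := by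
      intro j
      rw [← parB (e j) (S (e j))]
      exact Finset.sum_congr rfl fun i _ => by rw [hSb i (e j)]; ring
    simp_rw [h1]
    rw [Finset.sum_comm]
    refine Finset.sum_congr rfl fun i _ => ?_
    rw [← Finset.mul_sum]
    have h2 : ∑ j, ⟪b i, e j⟫ * ⟪b i, e j⟫ = ∑ j, ⟪e j, b i⟫ * ⟪e j, b i⟫ :=
      Finset.sum_congr rfl fun j _ => by rw [real_inner_comm]
    rw [h2, parE, real_inner_self_eq_norm_mul_norm, b.orthonormal.1 i, mul_one, mul_one]
  have trace2 : ∑ j, ‖S (e j)‖ ^ 2 = ∑ i, lam i ^ 2 := by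
    have h1 : ∀ j, ‖S (e j)‖ ^ 2 = ∑ i, lam i ^ 2 * (⟪b i, e j⟫ * ⟪b i, e j⟫) := by
      intro j
      rw [← real_inner_self_eq_norm_sq, ← parB (S (e j)) (S (e j))]
      exact Finset.sum_congr rfl fun i _ => by rw [hSb i (e j)]; ring
    simp_rw [h1]
    rw [Finset.sum_comm]
    refine Finset.sum_congr rfl fun i _ => ?_
    rw [← Finset.mul_sum]
    have h2 : ∑ j, ⟪b i, e j⟫ * ⟪b i, e j⟫ = ∑ j, ⟪e j, b i⟫ * ⟪e j, b i⟫ :=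
      Finset.sum_congr rfl fun j _ => by rw [real_inner_comm]
    rw [h2, parE, real_inner_self_eq_norm_mul_norm, b.orthonormal.1 i, mul_one, mul_one]
  -- replace ξ by a measurable representative
  obtain ⟨ξ', hmξ', hae⟩ := hmeas
  have hgauss' : ∀ u : EuclideanSpace ℝ (Fin d),
      ∫ ω, Real.exp ⟪u, ξ' ω⟫ ∂μ = Real.exp (⟪u, S u⟫ / 2) := by
    intro u
    have h : ∫ ω, Real.exp ⟪u, ξ ω⟫ ∂μ = ∫ ω, Real.exp ⟪u, ξ' ω⟫ ∂μ :=
      integral_congr_ae (hae.mono fun ω hω => by simp only [hω])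
    rw [← h, hgauss u]
  have hLHS : ∫ ω, Real.exp (l * ‖ξ ω‖ ^ 2) ∂μ = ∫ ω, Real.exp (l * ‖ξ' ω‖ ^ 2) ∂μ :=
    integral_congr_ae (hae.mono fun ω h => by dsimp only; rw [h])
  rw [hLHS]
  set c := Real.sqrt (2 * l) with hc
  have hc2 : c ^ 2 = 2 * l := Real.sq_sqrt (by linarith)
  have hklt : ∀ i, l * lam i < 1/2 := by
    intro i
    have h1 : 2 * (l * lam i) ≤ 2 * l * ‖S‖ := by nlinarith [hlamle i, hlam0 i]
    linarith
  have hpos1 : ∀ i, 0 < 1 - 2 * (l * lam i) := fun i => by linarith [hklt i]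
  -- Step A
  have stepA : ∀ x : EuclideanSpace ℝ (Fin d),
      ∫⁻ v, ENNReal.ofReal (Real.exp (∑ i, (c * ⟪b i, x⟫) * v i)) ∂(Measure.pi fun _ : Fin d => gaussianReal 0 1)
        = ENNReal.ofReal (Real.exp (l * ‖x‖ ^ 2)) := by
    intro x
    have h1 : ∀ v : Fin d → ℝ, ENNReal.ofReal (Real.exp (∑ i, (c * ⟪b i, x⟫) * v i))
        = ∏ i, ENNReal.ofReal (Real.exp ((c * ⟪b i, x⟫) * v i)) := by
      intro v
      rw [Real.exp_sum, ENNReal.ofReal_prod_of_nonneg (fun i _ => (Real.exp_pos _).le)]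
    simp_rw [h1]
    rw [lintegral_pi_prod (gaussianReal 0 1)
      (fun i t => ENNReal.ofReal (Real.exp ((c * ⟪b i, x⟫) * t))) (fun i => by fun_prop)]
    have h2 : ∀ i : Fin d, ∫⁻ t, ENNReal.ofReal (Real.exp ((c * ⟪b i, x⟫) * t))
        ∂(gaussianReal 0 1) = ENNReal.ofReal (Real.exp ((c * ⟪b i, x⟫) ^ 2 / 2)) :=
      fun i => lint_gauss_lin _
    rw [Finset.prod_congr rfl fun i _ => h2 i,
      ← ENNReal.ofReal_prod_of_nonneg (fun i _ => (Real.exp_pos _).le), ← Real.exp_sum]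
    congr 2
    have h3 : ∀ i : Fin d, (c * ⟪b i, x⟫) ^ 2 / 2 = l * (⟪b i, x⟫ * ⟪b i, x⟫) := by
      intro i
      rw [mul_pow, hc2]
      ring
    rw [Finset.sum_congr rfl fun i _ => h3 i, ← Finset.mul_sum, parB x x,
      real_inner_self_eq_norm_sq]
  -- measurability for Tonelli
  have hmF : AEMeasurable (Function.uncurry fun (ω : Ω) (v : Fin d → ℝ) =>
      ENNReal.ofReal (Real.exp (∑ i, (c * ⟪b i, ξ' ω⟫) * v i))) (μ.prod (Measure.pi fun _ : Fin d => gaussianReal 0 1)) := by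
    apply Measurable.aemeasurable
    apply Measurable.ennreal_ofReal
    apply Measurable.exp
    apply Finset.measurable_sum
    intro i _
    have h1 : Measurable fun p : Ω × (Fin d → ℝ) => ⟪b i, ξ' p.1⟫ :=
      (innerSL ℝ (b i)).continuous.measurable.comp (hmξ'.comp measurable_fst)
    exact (h1.const_mul c).mul ((measurable_pi_apply i).comp measurable_snd)
  -- Step C
  have stepC : ∀ v : Fin d → ℝ,
      ∫⁻ ω, ENNReal.ofReal (Real.exp (∑ i, (c * ⟪b i, ξ' ω⟫) * v i)) ∂μ
        = ENNReal.ofReal (Real.exp (l * ∑ i, lam i * v i ^ 2)) := by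
    intro v
    set u : EuclideanSpace ℝ (Fin d) := ∑ i, (c * v i) • b i with hu
    have h1 : ∀ x : EuclideanSpace ℝ (Fin d), ⟪u, x⟫ = ∑ i, (c * ⟪b i, x⟫) * v i := by
      intro x
      rw [hu, sum_inner]
      exact Finset.sum_congr rfl fun i _ => by rw [real_inner_smul_left]; ring
    have hbu : ∀ i, ⟪b i, u⟫ = c * v i := by
      intro i
      rw [hu]
      exact b.orthonormal.inner_right_fintype (fun j => c * v j) i
    have h2 : ⟪u, S u⟫ / 2 = l * ∑ i, lam i * v i ^ 2 := by
      have h3 : ⟪u, S u⟫ = ∑ i, (c * v i) * (lam i * (c * v i)) := by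
        rw [← parB u (S u)]
        exact Finset.sum_congr rfl fun i _ => by rw [hbu i, hSb i u, hbu i]
      have h4 : ∀ i : Fin d, (c * v i) * (lam i * (c * v i)) = 2 * l * (lam i * v i ^ 2) := by
        intro i
        have : (c * v i) * (lam i * (c * v i)) = c ^ 2 * (lam i * v i ^ 2) := by ring
        rw [this, hc2]
      rw [h3, Finset.sum_congr rfl fun i _ => h4 i, ← Finset.mul_sum]
      ring
    have hint : Integrable (fun ω => Real.exp ⟪u, ξ' ω⟫) μ := by
      by_contra hcon
      have h5 := integral_undef hcon
      rw [hgauss' u] at h5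
      exact (Real.exp_pos _).ne' h5
    have h6 : ∀ ω : Ω, ENNReal.ofReal (Real.exp (∑ i, (c * ⟪b i, ξ' ω⟫) * v i))
        = ENNReal.ofReal (Real.exp ⟪u, ξ' ω⟫) := fun ω => by rw [h1 (ξ' ω)]
    simp_rw [h6]
    rw [← ofReal_integral_eq_lintegral_ofReal hint
      (Filter.Eventually.of_forall fun ω => (Real.exp_pos _).le), hgauss' u, h2]
  -- key identity
  have key : ∫⁻ ω, ENNReal.ofReal (Real.exp (l * ‖ξ' ω‖ ^ 2)) ∂μ
      = ∏ i, ENNReal.ofReal (Real.sqrt (1 / (1 - 2 * (l * lam i)))) := by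
    calc ∫⁻ ω, ENNReal.ofReal (Real.exp (l * ‖ξ' ω‖ ^ 2)) ∂μ
        = ∫⁻ ω, ∫⁻ v, ENNReal.ofReal (Real.exp (∑ i, (c * ⟪b i, ξ' ω⟫) * v i)) ∂(Measure.pi fun _ : Fin d => gaussianReal 0 1) ∂μ :=
          lintegral_congr fun ω => (stepA (ξ' ω)).symm
      _ = ∫⁻ v, ∫⁻ ω, ENNReal.ofReal (Real.exp (∑ i, (c * ⟪b i, ξ' ω⟫) * v i)) ∂μ ∂(Measure.pi fun _ : Fin d => gaussianReal 0 1) :=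
          lintegral_lintegral_swap hmF
      _ = ∫⁻ v, ENNReal.ofReal (Real.exp (l * ∑ i, lam i * v i ^ 2)) ∂(Measure.pi fun _ : Fin d => gaussianReal 0 1) :=
          lintegral_congr stepC
      _ = ∏ i, ENNReal.ofReal (Real.sqrt (1 / (1 - 2 * (l * lam i)))) := by
          have h1 : ∀ v : Fin d → ℝ, ENNReal.ofReal (Real.exp (l * ∑ i, lam i * v i ^ 2))
              = ∏ i, ENNReal.ofReal (Real.exp ((l * lam i) * v i ^ 2)) := by
            intro v
            rw [Finset.mul_sum]
            simp_rw [← mul_assoc]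
            rw [Real.exp_sum, ENNReal.ofReal_prod_of_nonneg (fun i _ => (Real.exp_pos _).le)]
          simp_rw [h1]
          rw [lintegral_pi_prod (gaussianReal 0 1)
            (fun i t => ENNReal.ofReal (Real.exp ((l * lam i) * t ^ 2))) (fun i => by fun_prop)]
          exact Finset.prod_congr rfl fun i _ => lint_gauss_sq (hklt i)
  -- back to Bochner integral
  have hprodpos : ∀ i : Fin d, 0 < Real.sqrt (1 / (1 - 2 * (l * lam i))) :=
    fun i => Real.sqrt_pos.2 (div_pos one_pos (hpos1 i))
  have hwhole : ∫ ω, Real.exp (l * ‖ξ' ω‖ ^ 2) ∂μ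
      = ∏ i, Real.sqrt (1 / (1 - 2 * (l * lam i))) := by
    rw [integral_eq_lintegral_of_nonneg_ae
      (Filter.Eventually.of_forall fun ω => (Real.exp_pos _).le)
      ((((hmξ'.norm.pow_const 2).const_mul l).exp).aestronglyMeasurable),
      key, ← ENNReal.ofReal_prod_of_nonneg (fun i _ => (hprodpos i).le),
      ENNReal.toReal_ofReal (Finset.prod_nonneg fun i _ => (hprodpos i).le)]
  rw [hwhole, Real.log_prod (fun i _ => (hprodpos i).ne')]
  have hlog : ∀ i : Fin d, Real.log (Real.sqrt (1 / (1 - 2 * (l * lam i))))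
      ≤ l * lam i + l ^ 2 * lam i ^ 2 / (1 - 2 * l * ‖S‖) := by
    intro i
    rw [Real.log_sqrt (le_of_lt (div_pos one_pos (hpos1 i))), one_div, Real.log_inv]
    have hb := neg_log_one_sub_le (x := 2 * (l * lam i)) (a := 2 * l * ‖S‖)
      (mul_nonneg (by norm_num) (mul_nonneg hl0 (hlam0 i))) (by nlinarith [hlamle i, hlam0 i]) ha
    have heq : ∀ A : ℝ, A ≠ 0 → (2 * (l * lam i) + (2 * (l * lam i)) ^ 2 / (2 * A)) / 2
        = l * lam i + l ^ 2 * lam i ^ 2 / A := by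
      intro A hA
      field_simp
    have h1a : (0:ℝ) < 1 - 2 * l * ‖S‖ := by linarith
    have heq2 := heq (1 - 2 * l * ‖S‖) h1a.ne'
    linarith
  calc ∑ i, Real.log (Real.sqrt (1 / (1 - 2 * (l * lam i))))
      ≤ ∑ i, (l * lam i + l ^ 2 * lam i ^ 2 / (1 - 2 * l * ‖S‖)) :=
        Finset.sum_le_sum fun i _ => hlog i
    _ = l * (∑ i, lam i) + l ^ 2 * (∑ i, lam i ^ 2) / (1 - 2 * l * ‖S‖) := by
        rw [Finset.sum_add_distrib, ← Finset.mul_sum, ← Finset.sum_div, ← Finset.mul_sum]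
    _ = _ := by rw [trace1, trace2]
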